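/- If a torsion-free abelian group G has an endomorphism ring of finite rank, then G has a Main Decomposition G = A ⊕ H with A completely decomposable of finite rank and H clipped. -/

import Mathlib

namespace Paper

open DirectSum

/-- A subgroup is a direct summand. -/
def IsSummand {G : Type*} [AddCommGroup G] (A : AddSubgroup G) : Prop :=
  ∃ B : AddSubgroup G, IsCompl A B

/-- A group has rank one: it is nonzero and embeds in `ℚ`. -/
def IsRankOne (G : Type*) [AddCommGroup G] : Prop :=
  (∃ x : G, x ≠ 0) ∧ ∃ f : G →+ ℚ, Function.Injective f

/-- A group is clipped if it has no rank-one direct summand. -/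
def IsClipped (G : Type*) [AddCommGroup G] : Prop :=
  ¬ ∃ A : AddSubgroup G, IsSummand A ∧ IsRankOne A

/-- A group is `τ`-clipped if it has no direct summand isomorphic to the
rank-one group `τ` (a subgroup of `ℚ` representing a type). -/
def IsClippedFor (G : Type*) [AddCommGroup G] (τ : AddSubgroup ℚ) : Prop :=
  ¬ ∃ A : AddSubgroup G, IsSummand A ∧ Nonempty (A ≃+ τ)

/-- A group is completely decomposable if it is a direct sum of rank-one
groups (nonzero subgroups of `ℚ`). -/
def IsCompletelyDecomposable (G : Type*) [AddCommGroup G] : Prop :=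
  ∃ (ι : Type) (τ : ι → AddSubgroup ℚ), (∀ i, τ i ≠ ⊥) ∧ Nonempty (G ≃+ ⨁ i, τ i)

/-- A group is `τ`-homogeneous completely decomposable if it is a direct sum
of copies of the rank-one group `τ`. -/
def IsHomogeneousCD (G : Type*) [AddCommGroup G] (τ : AddSubgroup ℚ) : Prop :=
  τ ≠ ⊥ ∧ ∃ ι : Type, Nonempty (G ≃+ ⨁ _i : ι, τ)

/-- Two groups are mono-equivalent if each embeds into the other. -/
def MonoEquiv (G H : Type*) [AddCommGroup G] [AddCommGroup H] : Prop :=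
  (∃ f : G →+ H, Function.Injective f) ∧ (∃ f : H →+ G, Function.Injective f)

/-- A subgroup is pure if `n • x ∈ H` implies `n • x ∈ n • H`. -/
def IsPure {G : Type*} [AddCommGroup G] (H : AddSubgroup G) : Prop :=
  ∀ (n : ℤ) (x : G), n • x ∈ H → ∃ y ∈ H, n • y = n • x

/-- A group is strongly separable if every pure rank-one subgroup is a
direct summand. -/
def StronglySeparable (G : Type*) [AddCommGroup G] : Prop :=
  ∀ H : AddSubgroup G, IsPure H → IsRankOne H → IsSummand H

/-- The pure closure of an element: all `x` with `n • x` a multiple of `g`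
for some `n ≠ 0`. -/
def pureClosure {G : Type*} [AddCommGroup G] (g : G) : AddSubgroup G where
  carrier := {x | ∃ n : ℤ, n ≠ 0 ∧ n • x ∈ AddSubgroup.zmultiples g}
  zero_mem' := ⟨1, one_ne_zero, by simpa using (AddSubgroup.zmultiples g).zero_mem⟩
  add_mem' := by
    rintro x y ⟨n, hn, hx⟩ ⟨m, hm, hy⟩
    refine ⟨n * m, mul_ne_zero hn hm, ?_⟩
    have h : (n * m) • (x + y) = m • (n • x) + n • (m • y) := by
      rw [smul_add, mul_smul, mul_smul, smul_comm n m x]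
    rw [h]
    exact add_mem (AddSubgroup.zsmul_mem _ hx m) (AddSubgroup.zsmul_mem _ hy n)
  neg_mem' := by
    rintro x ⟨n, hn, hx⟩
    exact ⟨n, hn, by rw [smul_neg]; exact neg_mem hx⟩

/-- A group is indecomposable if it is nonzero and has no nontrivial
direct sum decomposition. -/
def IsIndecomposableGroup (G : Type*) [AddCommGroup G] : Prop :=
  (∃ x : G, x ≠ 0) ∧ ∀ A B : AddSubgroup G, IsCompl A B → A = ⊥ ∨ B = ⊥



/-! ### Auxiliary machinery for the proof of Statement 19 -/

section Aux

universe u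

variable {G : Type u} [AddCommGroup G]

/-- Coprod of inclusions into the sup, as an `AddEquiv`, given disjointness. -/
noncomputable def supEquivProd {X Y : AddSubgroup G} (h : Disjoint X Y) :
    (↥X × ↥Y) ≃+ ↥(X ⊔ Y) := by
  refine AddEquiv.ofBijective
    ((AddSubgroup.inclusion (le_sup_left : X ≤ X ⊔ Y)).coprod
      (AddSubgroup.inclusion (le_sup_right : Y ≤ X ⊔ Y))) ⟨?_, ?_⟩
  · rw [injective_iff_map_eq_zero]
    rintro ⟨a, b⟩ hab
    have hab' : (a : G) + (b : G) = 0 := by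
      have := congrArg (fun z : ↥(X ⊔ Y) => (z : G)) hab
      simpa [AddSubgroup.coe_inclusion] using this
    have haY : (a : G) ∈ Y := by
      have : (a : G) = -(b : G) := eq_neg_of_add_eq_zero_left hab'
      rw [this]; exact neg_mem b.2
    have ha0 : (a : G) = 0 := (AddSubgroup.disjoint_def.mp h) a.2 haY
    have hb0 : (b : G) = 0 := by rw [ha0, zero_add] at hab'; exact hab'
    refine Prod.ext (by ext; exact ha0) (by ext; exact hb0)
  · rintro ⟨z, hz⟩
    obtain ⟨x, hx, y, hy, hxy⟩ := AddSubgroup.mem_sup.mp hz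
    refine ⟨(⟨x, hx⟩, ⟨y, hy⟩), ?_⟩
    ext
    simpa [AddSubgroup.coe_inclusion] using hxy

@[simp] lemma supEquivProd_apply {X Y : AddSubgroup G} (h : Disjoint X Y) (a : ↥X) (b : ↥Y) :
    (supEquivProd h (a, b) : G) = (a : G) + (b : G) := by
  rfl

/-- A complement pair gives a product decomposition. -/
noncomputable def complEquivProd {X Y : AddSubgroup G} (hc : IsCompl X Y) :
    (↥X × ↥Y) ≃+ G :=
  (supEquivProd hc.disjoint).trans
    ((AddEquiv.addSubgroupCongr (codisjoint_iff.mp hc.codisjoint)).trans AddSubgroup.topEquiv)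

@[simp] lemma complEquivProd_apply {X Y : AddSubgroup G} (hc : IsCompl X Y) (a : ↥X) (b : ↥Y) :
    complEquivProd hc (a, b) = (a : G) + (b : G) := by
  simp only [complEquivProd, AddEquiv.trans_apply]
  exact supEquivProd_apply hc.disjoint a b

lemma rank_int_rat_le_one : Module.rank ℤ ℚ ≤ 1 := by
  apply rank_le
  intro s hs
  by_contra hcard
  push_neg at hcard
  obtain ⟨a, ha, b, hb, hab⟩ := Finset.one_lt_card.mp hcard
  have ha0 : (a : ℚ) ≠ 0 := hs.ne_zero ⟨a, ha⟩
  have hb0 : (b : ℚ) ≠ 0 := hs.ne_zero ⟨b, hb⟩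
  have hpair : LinearIndependent ℤ ![a, b] := by
    have hinj : Function.Injective (fun i : Fin 2 => if i = 0 then (⟨a, ha⟩ : s) else ⟨b, hb⟩) := by
      intro i j hij
      fin_cases i <;> fin_cases j <;> simp_all [Subtype.ext_iff]
    have := hs.comp _ hinj
    convert this using 1
    funext i
    fin_cases i <;> rfl
  have hda : (a.den : ℚ) ≠ 0 := Nat.cast_ne_zero.mpr a.den_nz
  have hdb : (b.den : ℚ) ≠ 0 := Nat.cast_ne_zero.mpr b.den_nz
  have hrel : (b.num * a.den) • a + (-(a.num * b.den)) • b = 0 := by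
    have hA : a * (a.den : ℚ) = a.num := by
      nth_rewrite 1 [← Rat.num_div_den a]
      exact div_mul_cancel₀ _ hda
    have hB : b * (b.den : ℚ) = b.num := by
      nth_rewrite 1 [← Rat.num_div_den b]
      exact div_mul_cancel₀ _ hdb
    push_cast [zsmul_eq_mul]
    linear_combination (b.num : ℚ) * hA - (a.num : ℚ) * hB
  obtain ⟨h1, -⟩ := LinearIndependent.pair_iff.mp hpair (b.num * a.den) (-(a.num * b.den)) hrel
  have : b.num ≠ 0 := Rat.num_ne_zero.mpr hb0
  have : (a.den : ℤ) ≠ 0 := Int.natCast_ne_zero.mpr a.den_nz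
  simp_all [mul_eq_zero]

lemma rank_prod_le (M N : Type u) [AddCommGroup M] [AddCommGroup N] :
    Module.rank ℤ (M × N) ≤ Module.rank ℤ M + Module.rank ℤ N := by
  haveI : Subsingleton (Module ℤ (M × N)) := AddCommGroup.uniqueIntModule.instSubsingleton
  have hinst : (AddCommGroup.toIntModule (M × N)) = (Prod.instModule) := Subsingleton.elim _ _
  rw [hinst]
  have h := LinearMap.rank_range_add_rank_ker (LinearMap.fst ℤ M N)
  rw [rank_range_of_surjective _ LinearMap.fst_surjective, LinearMap.ker_fst,
    ← (LinearEquiv.ofInjective _ (LinearMap.inr_injective (M := M) (M₂ := N))).rank_eq] at h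
  exact h.ge

lemma subgroup_nzsd (X : AddSubgroup G) [NoZeroSMulDivisors ℤ G] :
    NoZeroSMulDivisors ℤ ↥X := by
  constructor
  intro c x h
  have hc : c • (x : G) = 0 := by
    have := congrArg (fun z : ↥X => (z : G)) h
    simpa using this
  rcases eq_zero_or_eq_zero_of_smul_eq_zero hc with h0 | h0
  · exact Or.inl h0
  · exact Or.inr (by ext; simpa using h0)

/-- The order isomorphism on subgroup lattices induced by an `AddEquiv`. -/
def mapOrderIso {G₁ G₂ : Type*} [AddCommGroup G₁] [AddCommGroup G₂] (e : G₁ ≃+ G₂) :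
    AddSubgroup G₁ ≃o AddSubgroup G₂ where
  toFun X := X.map e.toAddMonoidHom
  invFun X := X.map e.symm.toAddMonoidHom
  left_inv X := by
    ext x
    simp [AddSubgroup.mem_map]
  right_inv X := by
    ext x
    simp [AddSubgroup.mem_map]
  map_rel_iff' := AddSubgroup.map_le_map_iff_of_injective e.injective

theorem isRankOne_congr {X Y : Type*} [AddCommGroup X] [AddCommGroup Y] (e : X ≃+ Y)
    (h : IsRankOne X) : IsRankOne Y := by
  obtain ⟨⟨x, hx⟩, f, hf⟩ := h
  refine ⟨⟨e x, fun h0 => hx (e.injective (by rw [h0, map_zero]))⟩,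
    f.comp e.symm.toAddMonoidHom, hf.comp e.symm.injective⟩

theorem isClipped_congr {X Y : Type*} [AddCommGroup X] [AddCommGroup Y] (e : X ≃+ Y)
    (h : IsClipped X) : IsClipped Y := by
  rintro ⟨A, ⟨Bc, hAB⟩, h1⟩
  exact h ⟨A.map e.symm.toAddMonoidHom,
    ⟨Bc.map e.symm.toAddMonoidHom, (mapOrderIso e.symm).isCompl hAB⟩,
    isRankOne_congr (AddSubgroup.equivMapOfInjective A e.symm.toAddMonoidHom e.symm.injective) h1⟩

/-- The key rank inequality: splitting off a nonzero direct summand drops the rank of the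
endomorphism ring by at least one. -/
theorem rank_end_succ_le [NoZeroSMulDivisors ℤ G] {T B : AddSubgroup G}
    (hc : IsCompl T B) (x₀ : ↥T) (hx₀ : x₀ ≠ 0) :
    Module.rank ℤ (↥B →+ ↥B) + 1 ≤ Module.rank ℤ (G →+ G) := by
  classical
  set e := complEquivProd hc with he
  set πT : G →+ ↥T := (AddMonoidHom.fst ↥T ↥B).comp e.symm.toAddMonoidHom with hπT
  set πB : G →+ ↥B := (AddMonoidHom.snd ↥T ↥B).comp e.symm.toAddMonoidHom with hπB
  have hsymmB : ∀ b : ↥B, e.symm (b : G) = (0, b) := by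
    intro b
    rw [AddEquiv.symm_apply_eq, he, complEquivProd_apply]
    simp
  have hsymmT : ∀ t : ↥T, e.symm (t : G) = (t, 0) := by
    intro t
    rw [AddEquiv.symm_apply_eq, he, complEquivProd_apply]
    simp
  have hπBB : ∀ b : ↥B, πB (b : G) = b := fun b => by simp [hπB, hsymmB b]
  have hπTB : ∀ b : ↥B, πT (b : G) = 0 := fun b => by simp [hπT, hsymmB b]
  have hπBT : ∀ t : ↥T, πB (t : G) = 0 := fun t => by simp [hπB, hsymmT t]
  have hπTT : ∀ t : ↥T, πT (t : G) = t := fun t => by simp [hπT, hsymmT t]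
  let Φ : ((↥B →+ ↥B) × ULift.{u} ℤ) →ₗ[ℤ] (G →+ G) :=
  { toFun := fun p => (B.subtype.comp (p.1.comp πB)) + p.2.down • (T.subtype.comp πT)
    map_add' := by
      intro p q
      ext x
      simp [add_smul]
      abel
    map_smul' := by
      intro c p
      ext x
      simp [mul_smul] }
  have hΦ : Function.Injective Φ := by
    rw [injective_iff_map_eq_zero]
    rintro ⟨f, n⟩ hf0
    have happ : ∀ x : G, (B.subtype (f (πB x)) : G) + n.down • (T.subtype (πT x) : G) = 0 := by
      intro x
      have := DFunLike.congr_fun hf0 x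
      simpa [Φ] using this
    have hfB : f = 0 := by
      ext b
      have := happ (b : G)
      rw [hπBB b, hπTB b] at this
      simp only [map_zero, smul_zero, add_zero] at this
      simpa using this
    have hn : n.down = 0 := by
      have := happ (x₀ : G)
      rw [hπBT x₀, hπTT x₀] at this
      simp only [map_zero, ZeroMemClass.coe_zero, smul_zero, zero_add] at this
      rcases eq_zero_or_eq_zero_of_smul_eq_zero this with h0 | h0
      · exact h0
      · exact absurd (Subtype.ext (by simpa using h0)) hx₀
    refine Prod.ext (by simpa using hfB) (ULift.ext _ _ (by simpa using hn))
  have h1 : Module.rank ℤ ((↥B →+ ↥B) × ULift.{u} ℤ) ≤ Module.rank ℤ (G →+ G) :=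
    Φ.rank_le_of_injective hΦ
  have h2 : Module.rank ℤ (↥B →+ ↥B) + Module.rank ℤ (ULift.{u} ℤ) ≤
      Module.rank ℤ ((↥B →+ ↥B) × ULift.{u} ℤ) := by
    haveI : Subsingleton (Module ℤ ((↥B →+ ↥B) × ULift.{u} ℤ)) :=
      AddCommGroup.uniqueIntModule.instSubsingleton
    have hinst : (AddCommGroup.toIntModule ((↥B →+ ↥B) × ULift.{u} ℤ)) = Prod.instModule :=
      Subsingleton.elim _ _
    rw [hinst]
    exact rank_add_rank_le_rank_prod ℤ (↥B →+ ↥B) (M₁ := ULift.{u} ℤ)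
  have h3 : Module.rank ℤ (ULift.{u} ℤ) = 1 := by
    haveI : Subsingleton (Module ℤ (ULift.{u} ℤ)) := AddCommGroup.uniqueIntModule.instSubsingleton
    have h := rank_ulift (R := ℤ) (M := ℤ)
    rw [Module.rank_self, Cardinal.lift_one] at h
    convert h using 2
  calc Module.rank ℤ (↥B →+ ↥B) + 1
      = Module.rank ℤ (↥B →+ ↥B) + Module.rank ℤ (ULift.{u} ℤ) := by rw [h3]
    _ ≤ Module.rank ℤ ((↥B →+ ↥B) × ULift.{u} ℤ) := h2
    _ ≤ Module.rank ℤ (G →+ G) := h1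

/-- The conclusion of Statement 19 in the case where `G` is already clipped. -/
theorem goal_of_clipped (h : IsClipped G) :
    ∃ A H : AddSubgroup G, IsCompl A H ∧ IsCompletelyDecomposable ↥A ∧
      Module.rank ℤ ↥A < Cardinal.aleph0 ∧ IsClipped ↥H := by
  refine ⟨⊥, ⊤, isCompl_bot_top, ?_, ?_, isClipped_congr AddSubgroup.topEquiv.symm h⟩
  · refine ⟨Empty, fun i => i.elim, fun i => i.elim, ⟨?_⟩⟩
    haveI : Unique (⨁ i : Empty, ↥((fun i => i.elim : Empty → AddSubgroup ℚ) i)) :=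
      DFinsupp.uniqueOfIsEmpty
    exact AddEquiv.ofUnique
  · haveI : Subsingleton ↥(⊥ : AddSubgroup G) := Unique.instSubsingleton
    rw [rank_subsingleton']
    exact Cardinal.aleph0_pos

/-- The inductive form of Statement 19. -/
theorem statement19_aux :
    ∀ (n : ℕ) (G : Type u) [AddCommGroup G] [NoZeroSMulDivisors ℤ G],
      Module.rank ℤ (G →+ G) < Cardinal.aleph0 →
      (Module.rank ℤ (G →+ G)).toNat ≤ n →
      ∃ A H : AddSubgroup G, IsCompl A H ∧ IsCompletelyDecomposable ↥A ∧
        Module.rank ℤ ↥A < Cardinal.aleph0 ∧ IsClipped ↥H := by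
  intro n
  induction n with
  | zero =>
    intro G _ _ hfin hle
    by_cases hcl : IsClipped G
    · exact goal_of_clipped hcl
    · exfalso
      obtain ⟨T, ⟨B, hc⟩, ⟨⟨x₀, hx₀⟩, -⟩⟩ := not_not.mp hcl
      have hkey := rank_end_succ_le hc x₀ hx₀
      have h1 : (1 : Cardinal) ≤ Module.rank ℤ (G →+ G) :=
        le_trans (le_add_self) hkey
      have h2 := Cardinal.toNat_le_toNat h1 hfin
      rw [← Nat.cast_one (R := Cardinal), Cardinal.toNat_natCast] at h2
      omega
  | succ n ih =>
    intro G _ _ hfin hle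
    by_cases hcl : IsClipped G
    · exact goal_of_clipped hcl
    · obtain ⟨T, ⟨B, hc⟩, hT1⟩ := not_not.mp hcl
      obtain ⟨⟨x₀, hx₀⟩, f, hf⟩ := hT1
      haveI : NoZeroSMulDivisors ℤ ↥B := subgroup_nzsd B
      have hkey := rank_end_succ_le hc x₀ hx₀
      have hBfin : Module.rank ℤ (↥B →+ ↥B) < Cardinal.aleph0 :=
        lt_of_le_of_lt (le_trans (self_le_add_right _ 1) hkey) hfin
      have hBle : (Module.rank ℤ (↥B →+ ↥B)).toNat ≤ n := by
        have hcast : ((Module.rank ℤ (↥B →+ ↥B)).toNat : Cardinal) =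
            Module.rank ℤ (↥B →+ ↥B) := Cardinal.cast_toNat_of_lt_aleph0 hBfin
        have hstep : (((Module.rank ℤ (↥B →+ ↥B)).toNat + 1 : ℕ) : Cardinal) ≤
            Module.rank ℤ (G →+ G) := by
          push_cast
          rw [hcast]
          exact hkey
        have := Cardinal.toNat_le_toNat hstep hfin
        rw [Cardinal.toNat_natCast] at this
        omega
      obtain ⟨A', H', hc', hCD', hrkA', hclip'⟩ := ih ↥B hBfin hBle
      -- push the decomposition of `B` into `G`
      set A'm : AddSubgroup G := A'.map B.subtype with hA'm
      set H'm : AddSubgroup G := H'.map B.subtype with hH'm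
      have hA'mB : A'm ≤ B := by
        rintro y hy
        obtain ⟨z, hz, rfl⟩ := AddSubgroup.mem_map.mp hy
        exact z.2
      have hH'mB : H'm ≤ B := by
        rintro y hy
        obtain ⟨z, hz, rfl⟩ := AddSubgroup.mem_map.mp hy
        exact z.2
      have hdisj : Disjoint T A'm := hc.disjoint.mono_right hA'mB
      have hsupm : A'm ⊔ H'm = B := by
        rw [hA'm, hH'm, ← AddSubgroup.map_sup, codisjoint_iff.mp hc'.codisjoint,
          ← AddMonoidHom.range_eq_map, AddSubgroup.range_subtype]
      have hdisjm : Disjoint A'm H'm := by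
        rw [disjoint_iff, hA'm, hH'm, ← AddSubgroup.map_inf _ _ _ B.subtype_injective,
          disjoint_iff.mp hc'.disjoint, AddSubgroup.map_bot]
      have hcompl : IsCompl (T ⊔ A'm) H'm := by
        constructor
        · rw [AddSubgroup.disjoint_def]
          intro x hx hxH
          obtain ⟨t, ht, a, ha, rfl⟩ := AddSubgroup.mem_sup.mp hx
          have htB : t ∈ B := by
            have h1 : t + a ∈ B := hH'mB hxH
            have h2 : a ∈ B := hA'mB ha
            simpa using sub_mem h1 h2
          have ht0 : t = 0 := (AddSubgroup.disjoint_def.mp hc.disjoint) ht htB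
          have hxH' : a ∈ H'm := by rwa [ht0, zero_add] at hxH
          rw [ht0, zero_add]
          exact (AddSubgroup.disjoint_def.mp hdisjm) ha hxH'
        · rw [codisjoint_iff, sup_assoc, hsupm, ← codisjoint_iff]
          exact hc.codisjoint
      -- the equivalences
      have e5 : ↥A' ≃+ ↥A'm := AddSubgroup.equivMapOfInjective A' B.subtype B.subtype_injective
      have e6 : (↥T × ↥A'm) ≃+ ↥(T ⊔ A'm) := supEquivProd hdisj
      obtain ⟨ι, τ, hτ, ⟨e3⟩⟩ := hCD'
      set τ₀ : AddSubgroup ℚ := f.range with hτ₀def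
      have hτ₀ : τ₀ ≠ ⊥ := by
        intro hbot
        have hmem : f x₀ ∈ τ₀ := ⟨x₀, rfl⟩
        rw [hbot, AddSubgroup.mem_bot] at hmem
        exact hx₀ (hf (by rw [hmem, map_zero]))
      have eT : ↥T ≃+ ↥τ₀ := AddMonoidHom.ofInjective hf
      refine ⟨T ⊔ A'm, H'm, hcompl, ?_, ?_,
        isClipped_congr (AddSubgroup.equivMapOfInjective H' B.subtype B.subtype_injective) hclip'⟩
      · -- completely decomposable
        refine ⟨Option ι, fun o => o.elim τ₀ τ, ?_, ?_⟩
        · rintro (_ | i)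
          · exact hτ₀
          · exact hτ i
        · exact ⟨(e6.symm.trans (eT.prodCongr (e5.symm.trans e3))).trans
            (DirectSum.addEquivProdDirectSum
              (α := fun j : Option ι => ↥(j.elim τ₀ τ))).symm⟩
      · -- finite rank
        have hr6 : Module.rank ℤ ↥(T ⊔ A'm) = Module.rank ℤ (↥T × ↥A'm) :=
          e6.symm.toIntLinearEquiv.rank_eq
        have hr5 : Module.rank ℤ ↥A'm = Module.rank ℤ ↥A' :=
          e5.symm.symm.toIntLinearEquiv.rank_eq.symm
        have hrT : Module.rank ℤ ↥T ≤ 1 := by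
          have h := LinearMap.lift_rank_le_of_injective f.toIntLinearMap hf
          have h' : Cardinal.lift.{u} (Module.rank ℤ ℚ) ≤ Cardinal.lift.{u} 1 :=
            Cardinal.lift_le.mpr rank_int_rat_le_one
          rw [Cardinal.lift_one] at h'
          have := h.trans h'
          rwa [Cardinal.lift_uzero] at this
        calc Module.rank ℤ ↥(T ⊔ A'm)
            = Module.rank ℤ (↥T × ↥A'm) := hr6
          _ ≤ Module.rank ℤ ↥T + Module.rank ℤ ↥A'm := rank_prod_le _ _
          _ ≤ 1 + Module.rank ℤ ↥A' := by rw [hr5]; exact add_le_add_left hrT _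
          _ < Cardinal.aleph0 := Cardinal.add_lt_aleph0 Cardinal.one_lt_aleph0 hrkA'

end Aux

/-- if the endomorphism ring of a torsion-free abelian group has
finite rank, then the group has a Main Decomposition with finite-rank
completely decomposable part. -/
theorem statement19 (G : Type*) [AddCommGroup G] [NoZeroSMulDivisors ℤ G]
    (hEnd : Module.rank ℤ (G →+ G) < Cardinal.aleph0) :
    ∃ A H : AddSubgroup G, IsCompl A H ∧ IsCompletelyDecomposable A ∧
      Module.rank ℤ A < Cardinal.aleph0 ∧ IsClipped H :=
  statement19_aux (Module.rank ℤ (G →+ G)).toNat G hEnd le_rfl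

end Paper
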